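/- With the notation of the previous statement, |∫_{a}^{a+h} (p(x)q(x) - L(x)) dx| ≤ (1/6) h² ‖p'‖_{L²(a,a+h)} ‖q'‖_{L²(a,a+h)}, where p' and q' are the (constant) derivatives of the affine functions p and q. -/

import Mathlib

open intervalIntegral

/-- On a 1D element `[a, a+h]`, for affine `p, q` with endpoint values and `L`
the affine interpolant of the product `p q` at the endpoints, the consistency
error is bounded by `(1/6) h² ‖p'‖_{L²(a,a+h)} ‖q'‖_{L²(a,a+h)}`, where the
(constant) derivatives are `p' = (p1-p0)/h`, `q' = (q1-q0)/h`. -/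
theorem massLumping_1d_consistency_bound
    (a h p0 p1 q0 q1 : ℝ) (hh : 0 < h)
    (p q L : ℝ → ℝ)
    (hp : ∀ x, p x = p0 + (p1 - p0) * (x - a) / h)
    (hq : ∀ x, q x = q0 + (q1 - q0) * (x - a) / h)
    (hL : ∀ x, L x = p0 * q0 + (p1 * q1 - p0 * q0) * (x - a) / h) :
    |∫ x in a..(a + h), (p x * q x - L x)| ≤
      (1 / 6) * h ^ 2 *
        Real.sqrt (∫ _x in a..(a + h), ((p1 - p0) / h) ^ 2) *
        Real.sqrt (∫ _x in a..(a + h), ((q1 - q0) / h) ^ 2) := by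
  have hne : h ≠ 0 := hh.ne'
  set c : ℝ := (p1 - p0) * (q1 - q0) with hc
  have hfun : ∀ x, p x * q x - L x =
      c / h ^ 2 * (x - a) ^ 2 - c / h * (x - a) := by
    intro x
    rw [hp, hq, hL]
    field_simp
    ring
  have hI1 : (∫ x in a..(a + h), (x - a) ^ 2) = h ^ 3 / 3 := by
    have h1 := intervalIntegral.integral_comp_sub_right (a := a) (b := a + h)
      (fun x => x ^ 2) a
    rw [integral_pow] at h1
    rw [h1]; norm_num
  have hI2 : (∫ x in a..(a + h), (x - a)) = h ^ 2 / 2 := by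
    have h1 := intervalIntegral.integral_comp_sub_right (a := a) (b := a + h)
      (fun x => x) a
    rw [integral_id] at h1
    rw [h1]; ring
  have hint : (∫ x in a..(a + h), (p x * q x - L x)) = -(c * h / 6) := by
    have : (∫ x in a..(a + h), (p x * q x - L x)) =
        ∫ x in a..(a + h), (c / h ^ 2 * (x - a) ^ 2 - c / h * (x - a)) := by
      apply intervalIntegral.integral_congr
      intro x _
      exact hfun x
    rw [this, intervalIntegral.integral_sub, intervalIntegral.integral_const_mul,
      intervalIntegral.integral_const_mul, hI1, hI2]
    · field_simp; ring
    · exact (continuous_const.mul ((continuous_id.sub continuous_const).pow 2)).intervalIntegrable _ _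
    · exact (continuous_const.mul (continuous_id.sub continuous_const)).intervalIntegrable _ _
  rw [hint]
  have hsq : ∀ d : ℝ, Real.sqrt (∫ _x in a..(a + h), (d / h) ^ 2) =
      |d| / Real.sqrt h := by
    intro d
    rw [intervalIntegral.integral_const]
    simp only [add_sub_cancel_left, smul_eq_mul]
    rw [div_pow, Real.sqrt_eq_iff_eq_sq]
    · rw [div_pow, Real.sq_sqrt hh.le]
      field_simp
      rw [sq_abs]
    · positivity
    · positivity
  rw [hsq, hsq]
  rw [abs_neg, abs_div, abs_mul]
  have hsh : Real.sqrt h > 0 := Real.sqrt_pos.mpr hh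
  have hh2 : Real.sqrt h * Real.sqrt h = h := Real.mul_self_sqrt hh.le
  have : (1 / 6) * h ^ 2 * (|p1 - p0| / Real.sqrt h) * (|q1 - q0| / Real.sqrt h)
      = |p1 - p0| * |q1 - q0| * h / 6 := by
    field_simp
    rw [Real.sq_sqrt hh.le]; ring
  rw [this, ← abs_mul]
  have : |c * h| = |c| * h := by rw [abs_mul, abs_of_pos hh]
  rw [this, hc, abs_mul]
  norm_num
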